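/- Let μ be a symmetric probability measure on ℝ. Then W₂(μ, b)² = ∫ (|x| − 1)² dμ(x), where b := (1/2)δ₋₁ + (1/2)δ₁ and W₂ denotes the 2-Wasserstein distance. -/

import Mathlib

open MeasureTheory Real
open scoped ENNReal

/-- The Rademacher (symmetric Bernoulli) distribution `b = (1/2)δ₋₁ + (1/2)δ₁`. -/
noncomputable def rademacher : Measure ℝ :=
  (1/2 : ℝ≥0∞) • Measure.dirac (-1) + (1/2 : ℝ≥0∞) • Measure.dirac 1

/-- The squared 2-Wasserstein distance between two measures on ℝ, as the infimum
of the quadratic transport cost over all couplings. -/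
noncomputable def W2sq (μ ν : Measure ℝ) : ℝ≥0∞ :=
  ⨅ (pi : Measure (ℝ × ℝ)) (_ : pi.map Prod.fst = μ) (_ : pi.map Prod.snd = ν),
    ∫⁻ p, ENNReal.ofReal ((p.1 - p.2) ^ 2) ∂pi

lemma W2_ptwise (x y : ℝ) (hy : y = -1 ∨ y = 1) : (|x| - 1) ^ 2 ≤ (x - y) ^ 2 := by
  rcases hy with rfl | rfl <;> rcases abs_cases x with ⟨h1, h2⟩ | ⟨h1, h2⟩ <;> nlinarith

lemma W2_cost_meas : Measurable fun p : ℝ × ℝ => ENNReal.ofReal ((p.1 - p.2) ^ 2) :=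
  ENNReal.measurable_ofReal.comp ((measurable_fst.sub measurable_snd).pow_const 2)

lemma W2_abs_meas : Measurable fun x : ℝ => ENNReal.ofReal ((|x| - 1) ^ 2) :=
  ENNReal.measurable_ofReal.comp ((measurable_abs.sub measurable_const).pow_const 2)

/-- For a symmetric probability measure `μ` on ℝ, the quadratic Wasserstein distance
to the Rademacher law is `W₂(μ,b)² = ∫ (|x| − 1)² dμ`. -/
theorem W2sq_to_rademacher_eq (μ : Measure ℝ) [IsProbabilityMeasure μ]
    (hsym : μ.map (fun x => -x) = μ) :
    W2sq μ rademacher = ∫⁻ x, ENNReal.ofReal ((|x| - 1) ^ 2) ∂μ := by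
  have hneg : Measurable fun x : ℝ => -x := measurable_neg
  have hhalf : (1/2 : ℝ≥0∞) + 1/2 = 1 := ENNReal.add_halves 1
  have hIio : μ (Set.Iio 0) = μ (Set.Ioi 0) := by
    conv_rhs => rw [← hsym]
    rw [Measure.map_apply hneg measurableSet_Ioi]
    congr 1
    ext x; simp [Set.mem_preimage, neg_pos]
  have hsplit1 : μ (Set.Iic 0) + μ (Set.Ioi 0) = 1 := by
    rw [← measure_univ (μ := μ), ← Set.Iic_union_Ioi (a := (0:ℝ))]
    exact (measure_union (Set.Iic_disjoint_Ioi le_rfl) measurableSet_Ioi).symm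
  have hsplit2 : μ (Set.Iio 0) + μ (Set.Ici 0) = 1 := by
    rw [← measure_univ (μ := μ), ← Set.Iio_union_Ici (a := (0:ℝ))]
    exact (measure_union (Set.Iio_disjoint_Ici le_rfl) measurableSet_Ici).symm
  set g : ℝ → ℝ := fun x => if x ≤ 0 then -1 else 1 with hg_def
  set h : ℝ → ℝ := fun x => if x < 0 then -1 else 1 with hh_def
  have hg : Measurable g := Measurable.ite measurableSet_Iic measurable_const measurable_const
  have hh : Measurable h := Measurable.ite measurableSet_Iio measurable_const measurable_const
  set π₀ : Measure (ℝ × ℝ) :=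
    (1/2 : ℝ≥0∞) • μ.map (fun x => (x, g x)) + (1/2 : ℝ≥0∞) • μ.map (fun x => (x, h x)) with hπ₀
  have hmg : Measurable fun x : ℝ => (x, g x) := measurable_id.prodMk hg
  have hmh : Measurable fun x : ℝ => (x, h x) := measurable_id.prodMk hh
  have hfst : π₀.map Prod.fst = μ := by
    rw [hπ₀, Measure.map_add _ _ measurable_fst, Measure.map_smul, Measure.map_smul,
      Measure.map_map measurable_fst hmg, Measure.map_map measurable_fst hmh]
    have h1 : (Prod.fst ∘ fun x : ℝ => (x, g x)) = id := rfl
    have h2 : (Prod.fst ∘ fun x : ℝ => (x, h x)) = id := rfl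
    rw [h1, h2, Measure.map_id, ← add_smul, hhalf, one_smul]
  have hsnd : π₀.map Prod.snd = rademacher := by
    rw [hπ₀, Measure.map_add _ _ measurable_snd, Measure.map_smul, Measure.map_smul,
      Measure.map_map measurable_snd hmg, Measure.map_map measurable_snd hmh]
    have hgc : (Prod.snd ∘ fun x : ℝ => (x, g x)) = g := rfl
    have hhc : (Prod.snd ∘ fun x : ℝ => (x, h x)) = h := rfl
    rw [hgc, hhc]
    ext s hs
    have hrad : rademacher s
        = (1/2 : ℝ≥0∞) * s.indicator 1 (-1) + (1/2 : ℝ≥0∞) * s.indicator 1 1 := by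
      simp [rademacher, Measure.dirac_apply' _ hs]
    rw [Measure.add_apply, Measure.smul_apply, Measure.smul_apply,
      Measure.map_apply hg hs, Measure.map_apply hh hs, hrad]
    by_cases h1 : (-1:ℝ) ∈ s <;> by_cases h2 : (1:ℝ) ∈ s
    · have e1 : g ⁻¹' s = Set.univ := by
        ext x; by_cases hx : x ≤ 0 <;> simp [hg_def, hx, h1, h2, not_le, not_lt] <;> linarith
      have e2 : h ⁻¹' s = Set.univ := by
        ext x; by_cases hx : x < 0 <;> simp [hh_def, hx, h1, h2, not_le, not_lt] <;> linarith
      rw [e1, e2, Set.indicator_of_mem h1, Set.indicator_of_mem h2]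
      simp
    · have e1 : g ⁻¹' s = Set.Iic 0 := by
        ext x; by_cases hx : x ≤ 0 <;> simp [hg_def, hx, h1, h2, not_le, not_lt] <;> linarith
      have e2 : h ⁻¹' s = Set.Iio 0 := by
        ext x; by_cases hx : x < 0 <;> simp [hh_def, hx, h1, h2, not_le, not_lt] <;> linarith
      have key : μ (Set.Iic 0) + μ (Set.Iio 0) = 1 := by rw [hIio]; exact hsplit1
      rw [e1, e2, Set.indicator_of_mem h1, Set.indicator_of_notMem h2, smul_eq_mul,
        smul_eq_mul, ← mul_add, key]
      simp
    · have e1 : g ⁻¹' s = Set.Ioi 0 := by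
        ext x; by_cases hx : x ≤ 0 <;> simp [hg_def, hx, h1, h2, not_le, not_lt] <;> linarith
      have e2 : h ⁻¹' s = Set.Ici 0 := by
        ext x; by_cases hx : x < 0 <;> simp [hh_def, hx, h1, h2, not_le, not_lt] <;> linarith
      have key : μ (Set.Ioi 0) + μ (Set.Ici 0) = 1 := by rw [← hIio]; exact hsplit2
      rw [e1, e2, Set.indicator_of_notMem h1, Set.indicator_of_mem h2, smul_eq_mul,
        smul_eq_mul, ← mul_add, key]
      simp
    · have e1 : g ⁻¹' s = ∅ := by
        ext x; by_cases hx : x ≤ 0 <;> simp [hg_def, hx, h1, h2, not_le, not_lt] <;> linarith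
      have e2 : h ⁻¹' s = ∅ := by
        ext x; by_cases hx : x < 0 <;> simp [hh_def, hx, h1, h2, not_le, not_lt] <;> linarith
      rw [e1, e2, Set.indicator_of_notMem h1, Set.indicator_of_notMem h2]
      simp
  have hcost_g : ∫⁻ p, ENNReal.ofReal ((p.1 - p.2) ^ 2) ∂(μ.map (fun x => (x, g x)))
      = ∫⁻ x, ENNReal.ofReal ((|x| - 1) ^ 2) ∂μ := by
    rw [lintegral_map W2_cost_meas hmg]
    refine lintegral_congr fun x => ?_
    congr 1
    by_cases hx : x ≤ 0
    · rw [hg_def]; simp only [hx, if_true]; rw [abs_of_nonpos hx]; ring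
    · rw [hg_def]; simp only [hx, if_false]; rw [abs_of_pos (lt_of_not_ge hx)]
  have hcost_h : ∫⁻ p, ENNReal.ofReal ((p.1 - p.2) ^ 2) ∂(μ.map (fun x => (x, h x)))
      = ∫⁻ x, ENNReal.ofReal ((|x| - 1) ^ 2) ∂μ := by
    rw [lintegral_map W2_cost_meas hmh]
    refine lintegral_congr fun x => ?_
    congr 1
    by_cases hx : x < 0
    · rw [hh_def]; simp only [hx, if_true]; rw [abs_of_neg hx]; ring
    · rw [hh_def]; simp only [hx, if_false]; rw [abs_of_nonneg (le_of_not_gt hx)]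
  have hub : W2sq μ rademacher ≤ ∫⁻ x, ENNReal.ofReal ((|x| - 1) ^ 2) ∂μ := by
    refine iInf_le_of_le π₀ (iInf_le_of_le hfst (iInf_le_of_le hsnd (le_of_eq ?_)))
    rw [hπ₀, lintegral_add_measure, lintegral_smul_measure, lintegral_smul_measure,
      hcost_g, hcost_h]
    rw [← add_smul, hhalf, one_smul]
  have hlb : (∫⁻ x, ENNReal.ofReal ((|x| - 1) ^ 2) ∂μ) ≤ W2sq μ rademacher := by
    refine le_iInf fun pp => le_iInf fun h1 => le_iInf fun h2 => ?_
    have hset : MeasurableSet (({-1, 1} : Set ℝ)ᶜ) :=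
      ((measurableSet_singleton (1:ℝ)).insert (-1)).compl
    have hnull : pp (Prod.snd ⁻¹' (({-1, 1} : Set ℝ)ᶜ)) = 0 := by
      rw [← Measure.map_apply measurable_snd hset, h2]
      simp [rademacher, Measure.dirac_apply' _ hset]
    have hae : ∀ᵐ p ∂pp, p.2 = -1 ∨ p.2 = 1 := by
      have hEq : {p : ℝ × ℝ | ¬(p.2 = -1 ∨ p.2 = 1)} = Prod.snd ⁻¹' (({-1, 1} : Set ℝ)ᶜ) := by
        ext p; simp [Set.mem_insert_iff]
      rw [ae_iff, hEq]
      exact hnull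
    calc ∫⁻ x, ENNReal.ofReal ((|x| - 1) ^ 2) ∂μ
        = ∫⁻ p, ENNReal.ofReal ((|p.1| - 1) ^ 2) ∂pp := by
          rw [← h1, lintegral_map W2_abs_meas measurable_fst]
      _ ≤ ∫⁻ p, ENNReal.ofReal ((p.1 - p.2) ^ 2) ∂pp :=
          lintegral_mono_ae (hae.mono fun p hp =>
            ENNReal.ofReal_le_ofReal (W2_ptwise _ _ hp))
  exact le_antisymm hub hlb
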